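/- For -1 < α < 0 and integers n ≥ m+1 ≥ 2, the squared L²-norm of the Type III exceptional X_m-Laguerre polynomial with respect to the weight W_m^{III,α}(x) = x^α e^{-x}/(L_m^{-α-1}(-x))^2 on (0,∞) is ∫_0^∞ (L_{m,n}^{III,α}(x))^2 · W_m^{III,α}(x) dx = n·Γ(n - m + α + 1)/(n - m - 1)!. -/

import Mathlib

open Finset

/-- Generalized Laguerre polynomial `L_n^α(x) = ∑_{k=0}^n (-1)^k binom(n+α, n-k) x^k / k!`. -/
noncomputable def lag (α : ℝ) (n : ℕ) (x : ℝ) : ℝ :=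
  ∑ k ∈ Finset.range (n + 1),
    (-1 : ℝ) ^ k * (∏ j ∈ Finset.range (n - k), (α + (k : ℝ) + 1 + (j : ℝ))) /
      ((Nat.factorial (n - k) : ℝ) * (Nat.factorial k : ℝ)) * x ^ k

/-- Generalized Laguerre polynomial with integer index, with the convention
`L_n^α := 0` for `n < 0`. -/
noncomputable def lagZ (α : ℝ) (n : ℤ) (x : ℝ) : ℝ :=
  if 0 ≤ n then lag α n.toNat x else 0

/-- The Type III exceptional `X_m`-Laguerre polynomial of degree `m + k` (for `k ≥ 1`):
`L_{m,m+k}^{III,α}(x) = x L_{k-2}^{α+2}(x) L_m^{-α-1}(-x) + (m+1) L_{k-1}^{α+1}(x) L_{m+1}^{-α-2}(-x)`. -/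
noncomputable def LIII (α : ℝ) (m k : ℕ) (x : ℝ) : ℝ :=
  x * lagZ (α + 2) ((k : ℤ) - 2) x * lag (-α - 1) m (-x)
    + ((m : ℝ) + 1) * lag (α + 1) (k - 1) x * lag (-α - 2) (m + 1) (-x)

open MeasureTheory

open Filter

-- from t1.lean
lemma lag_zero (β : ℝ) (x : ℝ) : lag β 0 x = 1 := by
  simp [lag]

lemma lag_one (β : ℝ) (x : ℝ) : lag β 1 x = β + 1 - x := by
  simp [lag, Finset.sum_range_succ]
  ring

lemma lag_at_zero (β : ℝ) (n : ℕ) :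
    lag β n 0 = (∏ r ∈ Finset.range n, (β + 1 + r)) / n.factorial := by
  rw [lag, Finset.sum_eq_single 0]
  · simp
  · intro k _ hk
    simp [zero_pow hk]
  · simp


-- from t2.lean
lemma lag_hasDerivAt (β : ℝ) (j : ℕ) (x : ℝ) :
    HasDerivAt (lag β (j + 1)) (-(lag (β + 1) j x)) x := by
  have h : HasDerivAt (lag β (j + 1))
      (∑ k ∈ Finset.range (j + 2),
        (-1 : ℝ) ^ k * (∏ r ∈ Finset.range (j + 1 - k), (β + (k : ℝ) + 1 + (r : ℝ))) /
          ((Nat.factorial (j + 1 - k) : ℝ) * (Nat.factorial k : ℝ)) * ((k : ℝ) * x ^ (k - 1))) x := by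
    apply HasDerivAt.fun_sum
    intro k _
    exact (hasDerivAt_pow k x).const_mul _
  convert h using 1
  rw [Finset.sum_range_succ' (fun k => (-1 : ℝ) ^ k *
      (∏ r ∈ Finset.range (j + 1 - k), (β + (k : ℝ) + 1 + (r : ℝ))) /
      ((Nat.factorial (j + 1 - k) : ℝ) * (Nat.factorial k : ℝ)) * ((k : ℝ) * x ^ (k - 1)))]
  simp only [Nat.cast_zero, zero_mul, mul_zero, add_zero]
  rw [lag, neg_eq_iff_eq_neg, ← Finset.sum_neg_distrib]
  apply Finset.sum_congr rfl
  intro i _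
  have h1 : j + 1 - (i + 1) = j - i := by omega
  have h2 : ∀ r : ℕ, β + ((i : ℝ) + 1) + 1 + r = β + 1 + i + 1 + r := by intro r; ring
  rw [h1]
  push_cast
  have h3 : (∏ r ∈ Finset.range (j - i), (β + ((i : ℝ) + 1) + 1 + (r : ℝ)))
      = (∏ r ∈ Finset.range (j - i), (β + 1 + (i : ℝ) + 1 + (r : ℝ))) := by
    apply Finset.prod_congr rfl; intro r _; ring
  rw [h3, Nat.factorial_succ]
  push_cast
  have hf1 : (Nat.factorial (j - i) : ℝ) ≠ 0 := by positivity
  have hf2 : (Nat.factorial i : ℝ) ≠ 0 := by positivity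
  field_simp
  ring


-- from t3.lean
lemma lag_two (β : ℝ) (x : ℝ) :
    lag β 2 x = (β + 1) * (β + 2) / 2 - (β + 2) * x + x ^ 2 / 2 := by
  simp [lag, Finset.sum_range_succ, Finset.prod_range_succ]
  ring

/-- The key recurrence: `(j+2) L_{j+2}^β = (β+1-x) L_{j+1}^{β+1} - x L_j^{β+2}`. -/
lemma lag_rec (j : ℕ) : ∀ (β x : ℝ),
    ((j : ℝ) + 2) * lag β (j + 2) x = (β + 1 - x) * lag (β + 1) (j + 1) x - x * lag (β + 2) j x := by
  induction j with
  | zero =>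
    intro β x
    simp only [Nat.cast_zero, zero_add, lag_zero, lag_one, lag_two]
    ring
  | succ j ih =>
    intro β x
    set Φ : ℝ → ℝ := fun y =>
      ((j : ℝ) + 3) * lag β (j + 3) y -
        ((β + 1 - y) * lag (β + 1) (j + 2) y - y * lag (β + 2) (j + 1) y) with hΦ
    have hd : ∀ y : ℝ, HasDerivAt Φ 0 y := by
      intro y
      have h1 : HasDerivAt (fun y => ((j : ℝ) + 3) * lag β (j + 3) y)
          (((j : ℝ) + 3) * (-(lag (β + 1) (j + 2) y))) y :=
        (lag_hasDerivAt β (j + 2) y).const_mul _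
      have h2 : HasDerivAt (fun y => (β + 1 - y) * lag (β + 1) (j + 2) y)
          ((-1) * lag (β + 1) (j + 2) y + (β + 1 - y) * (-(lag (β + 2) (j + 1) y))) y := by
        have := ((hasDerivAt_const y (β+1)).sub (hasDerivAt_id y)).mul (lag_hasDerivAt (β+1) (j+1) y)
        simp only [id_eq, zero_sub] at this
        exact this.congr_deriv (by simp only [Pi.sub_apply, id_eq]; ring)
      have h3 : HasDerivAt (fun y => y * lag (β + 2) (j + 1) y)
          (1 * lag (β + 2) (j + 1) y + y * (-(lag (β + 3) j y))) y := by
        have := (hasDerivAt_id y).mul (lag_hasDerivAt (β + 2) j y)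
        simp only [id_eq] at this
        exact this.congr_deriv (by ring)
      have := (h1.sub (h2.sub h3))
      refine this.congr_deriv ?_
      have key := ih (β + 1) y
      have e1 : β + 1 + 1 = β + 2 := by ring
      have e2 : β + 1 + 2 = β + 3 := by ring
      rw [e1, e2] at key
      push_cast at key ⊢
      linarith [key]
    have hconst : Φ x = Φ 0 :=
      is_const_of_deriv_eq_zero (fun y => (hd y).differentiableAt)
        (fun y => (hd y).deriv) x 0
    have hzero : Φ 0 = 0 := by
      simp only [hΦ, lag_at_zero, mul_zero, zero_mul, sub_zero, mul_comm]
      have hp : (∏ r ∈ Finset.range (j + 3), (β + 1 + (r : ℝ)))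
          = (β + 1) * ∏ r ∈ Finset.range (j + 2), (β + 1 + 1 + (r : ℝ)) := by
        rw [Finset.prod_range_succ' (fun r => β + 1 + (r : ℝ))]
        push_cast
        rw [mul_comm]
        congr 1
        · ring
        · apply Finset.prod_congr rfl; intro r _; ring
      rw [hp]
      have h3 : (Nat.factorial (j + 3) : ℝ) = ((j:ℝ) + 3) * (Nat.factorial (j + 2) : ℝ) := by
        rw [show j + 3 = (j+2) + 1 by ring, Nat.factorial_succ]; push_cast; ring
      rw [h3]
      have hf : (Nat.factorial (j + 2) : ℝ) ≠ 0 := by positivity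
      field_simp
      ring
    have : Φ x = 0 := hconst.trans hzero
    have e := sub_eq_zero.mp this
    push_cast
    push_cast at e
    linarith [e]


-- from t4.lean
/-- Alternating binomial sums kill polynomials of low degree (products form). -/
lemma fdiff (j : ℕ) : ∀ (c : ℝ) (i : ℕ), i ≤ j →
    ∑ l ∈ Finset.range (j + 1),
        (-1 : ℝ) ^ l * (j.choose l : ℝ) * ∏ r ∈ Finset.range i, (c + (l : ℝ) + (r : ℝ))
      = if i = j then (-1 : ℝ) ^ j * (j.factorial : ℝ) else 0 := by
  induction j with
  | zero =>
    intro c i hi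
    interval_cases i
    simp
  | succ j ih =>
    intro c i hi
    rcases Nat.eq_zero_or_pos i with h0 | hpos
    · subst h0
      simp only [Finset.prod_range_zero, mul_one]
      rw [if_neg (by omega)]
      have hb := Int.alternating_sum_range_choose_of_ne (Nat.succ_ne_zero j)
      have : ((∑ l ∈ Finset.range (j + 2), (-1 : ℤ) ^ l * ((j+1).choose l : ℤ) : ℤ) : ℝ)
          = ∑ l ∈ Finset.range (j + 2), (-1 : ℝ) ^ l * ((j+1).choose l : ℝ) := by
        push_cast; rfl
      rw [← this, hb]
      norm_num
    · obtain ⟨i', rfl⟩ : ∃ i', i = i' + 1 := ⟨i - 1, by omega⟩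
      set q : ℕ → ℝ := fun l => ∏ r ∈ Finset.range (i' + 1), (c + (l : ℝ) + (r : ℝ)) with hq
      have hsplit : ∑ l ∈ Finset.range (j + 2), (-1 : ℝ) ^ l * ((j+1).choose l : ℝ) * q l
          = ∑ l ∈ Finset.range (j + 1), (-1 : ℝ) ^ l * (j.choose l : ℝ) * (q l - q (l + 1)) := by
        rw [Finset.sum_range_succ' (fun l => (-1 : ℝ) ^ l * ((j+1).choose l : ℝ) * q l)]
        have e1 : ∀ l, ((j+1).choose (l+1) : ℝ) = (j.choose l : ℝ) + (j.choose (l+1) : ℝ) := by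
          intro l; rw [Nat.choose_succ_succ]; push_cast; ring
        simp only [e1]
        rw [Finset.sum_congr rfl (fun l _ => by ring :
          ∀ l ∈ Finset.range (j+1), (-1:ℝ)^(l+1) * (((j.choose l : ℝ)) + (j.choose (l+1):ℝ)) * q (l+1)
            = -((-1:ℝ)^l * (j.choose l : ℝ) * q (l+1)) + (-1:ℝ)^(l+1) * (j.choose (l+1) : ℝ) * q (l+1))]
        rw [Finset.sum_add_distrib]
        have e2 : ∑ l ∈ Finset.range (j+1), (-1:ℝ)^(l+1) * (j.choose (l+1) : ℝ) * q (l+1)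
            = ∑ l ∈ Finset.range (j+1), (-1:ℝ)^l * (j.choose l : ℝ) * q l
              - ((-1:ℝ)^0 * (j.choose 0 : ℝ) * q 0) := by
          rw [Finset.sum_range_succ' (fun l => (-1:ℝ)^l * (j.choose l : ℝ) * q l)]
          have : ((-1:ℝ)^(j+1) * (j.choose (j+1) : ℝ) * q (j+1)) = 0 := by
            simp [Nat.choose_succ_self]
          rw [Finset.sum_range_succ]
          rw [this]
          ring
        rw [e2]
        simp only [Nat.choose_zero_right, Nat.cast_one, pow_zero, one_mul, Nat.cast_ofNat]
        simp only [mul_sub]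
        rw [Finset.sum_sub_distrib]
        simp only [Finset.sum_neg_distrib]
        ring
      have hdiffq : ∀ l : ℕ, q l - q (l + 1)
          = -((i' : ℝ) + 1) * ∏ r ∈ Finset.range i', (c + 1 + (l : ℝ) + (r : ℝ)) := by
        intro l
        have hql : q l = (∏ r ∈ Finset.range i', (c + 1 + (l : ℝ) + (r : ℝ))) * (c + l) := by
          rw [hq]
          simp only
          rw [Finset.prod_range_succ' (fun r => c + (l : ℝ) + (r : ℝ))]
          push_cast
          congr 1
          · apply Finset.prod_congr rfl; intro r _; ring
          · ring
        have hql1 : q (l+1) = (∏ r ∈ Finset.range i', (c + 1 + (l : ℝ) + (r : ℝ)))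
            * (c + l + 1 + i') := by
          rw [hq]
          simp only
          push_cast
          rw [Finset.prod_range_succ (fun r => c + ((l : ℝ) + 1) + (r : ℝ))]
          congr 1
          · apply Finset.prod_congr rfl; intro r _; ring
          · ring
        rw [hql, hql1]
        ring
      rw [hsplit]
      simp only [hdiffq]
      rw [Finset.sum_congr rfl (fun l _ => by ring :
        ∀ l ∈ Finset.range (j+1), (-1:ℝ)^l * (j.choose l : ℝ) *
            (-((i' : ℝ) + 1) * ∏ r ∈ Finset.range i', (c + 1 + (l : ℝ) + (r : ℝ)))
          = -((i' : ℝ) + 1) * ((-1:ℝ)^l * (j.choose l : ℝ) * ∏ r ∈ Finset.range i', ((c+1) + (l : ℝ) + (r : ℝ)))), ← Finset.mul_sum]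
      rw [ih (c+1) i' (by omega)]
      rcases eq_or_ne (i' + 1) (j + 1) with he | hne
      · rw [if_pos he, if_pos (by omega : i' = j)]
        have : i' = j := by omega
        subst this
        rw [Nat.factorial_succ]
        push_cast
        ring
      · rw [if_neg hne, if_neg (by omega : ¬ i' = j)]
        ring


-- from t5.lean
lemma Gamma_shift (t : ℝ) (ht : 0 < t) (p : ℕ) :
    Real.Gamma (t + p) = (∏ r ∈ Finset.range p, (t + r)) * Real.Gamma t := by
  induction p with
  | zero => simp
  | succ p ih =>
    have h1 : t + ((p : ℝ) + 1) = (t + p) + 1 := by ring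
    push_cast
    rw [h1, Real.Gamma_add_one (by positivity), Finset.prod_range_succ]
    push_cast
    rw [ih]
    ring

lemma Ibase (s : ℝ) (hs : -1 < s) :
    IntegrableOn (fun x : ℝ => x ^ s * Real.exp (-x)) (Set.Ioi 0) := by
  have h := Real.GammaIntegral_convergent (by linarith : (0:ℝ) < s + 1)
  apply h.congr_fun ?_ measurableSet_Ioi
  intro x _
  simp only
  rw [show s + 1 - 1 = s by ring]
  ring

lemma mono_integral (s : ℝ) (hs : -1 < s) :
    ∫ x in Set.Ioi (0:ℝ), x ^ s * Real.exp (-x) = Real.Gamma (s + 1) := by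
  rw [Real.Gamma_eq_integral (by linarith : (0:ℝ) < s + 1)]
  apply setIntegral_congr_fun measurableSet_Ioi
  intro x _
  simp only
  rw [show s + 1 - 1 = s by ring]
  ring


-- from t7.lean
/-- For `α < 0`, `L_m^{-α-1}(-x)` has positive coefficients as a polynomial in `x`. -/
lemma eta_expand (α : ℝ) (m : ℕ) (x : ℝ) :
    lag (-α - 1) m (-x)
      = ∑ k ∈ Finset.range (m + 1),
          (∏ r ∈ Finset.range (m - k), ((k : ℝ) - α + (r : ℝ))) /
            ((Nat.factorial (m - k) : ℝ) * (Nat.factorial k : ℝ)) * x ^ k := by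
  rw [lag]
  apply Finset.sum_congr rfl
  intro k _
  rw [neg_pow x k]
  have : ∀ r : ℕ, -α - 1 + (k : ℝ) + 1 + r = (k : ℝ) - α + r := fun r => by ring
  simp only [this]
  rcases Nat.even_or_odd k with he | ho
  · rw [he.neg_one_pow]; ring
  · rw [ho.neg_one_pow]; ring

lemma eta_pos (α : ℝ) (hα : α < 0) (m : ℕ) {x : ℝ} (hx : 0 ≤ x) :
    0 < lag (-α - 1) m (-x) := by
  rw [eta_expand]
  apply Finset.sum_pos'
  · intro k _
    have h1 : 0 < ∏ r ∈ Finset.range (m - k), ((k : ℝ) - α + (r : ℝ)) := by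
      apply Finset.prod_pos
      intro r _
      have : (0:ℝ) ≤ k := Nat.cast_nonneg k
      have : (0:ℝ) ≤ r := Nat.cast_nonneg r
      linarith
    positivity
  · refine ⟨0, Finset.mem_range.mpr (Nat.succ_pos m), ?_⟩
    have h1 : 0 < ∏ r ∈ Finset.range (m - 0), ((0 : ℝ) - α + (r : ℝ)) := by
      apply Finset.prod_pos
      intro r _
      have : (0:ℝ) ≤ r := Nat.cast_nonneg r
      linarith
    simp only [pow_zero, mul_one, Nat.cast_zero]
    positivity

lemma eta_lower (α : ℝ) (hα : α < 0) (m : ℕ) {x : ℝ} (hx : 0 ≤ x) :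
    lag (-α - 1) m (-0) ≤ lag (-α - 1) m (-x) := by
  rw [eta_expand, eta_expand]
  apply Finset.sum_le_sum
  intro k _
  have h1 : 0 ≤ ∏ r ∈ Finset.range (m - k), ((k : ℝ) - α + (r : ℝ)) := by
    apply Finset.prod_nonneg
    intro r _
    have : (0:ℝ) ≤ k := Nat.cast_nonneg k
    have : (0:ℝ) ≤ r := Nat.cast_nonneg r
    linarith
  have h2 : (0:ℝ) ^ k ≤ x ^ k := by
    rcases Nat.eq_zero_or_pos k with rfl | hk
    · simp
    · rw [zero_pow (by omega)]
      positivity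
  have h3 : (0:ℝ) < ((Nat.factorial (m - k) : ℝ) * (Nat.factorial k : ℝ)) := by positivity
  apply mul_le_mul_of_nonneg_left h2
  positivity


-- from t8.lean
lemma poly_tendsto (P : Polynomial ℝ) (s : ℝ) :
    Tendsto (fun x => P.eval x * (x ^ s * Real.exp (-x))) atTop (nhds 0) := by
  induction P using Polynomial.induction_on' with
  | add p q hp hq =>
    have := hp.add hq
    simp only [Polynomial.eval_add, add_zero] at this ⊢
    convert this using 2
    ring
  | monomial n c =>
    simp only [Polynomial.eval_monomial]
    have h := (tendsto_rpow_mul_exp_neg_mul_atTop_nhds_zero ((n : ℝ) + s) 1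
      one_pos).const_mul c
    rw [mul_zero] at h
    apply h.congr'
    filter_upwards [eventually_gt_atTop (0:ℝ)] with x hx
    rw [Real.rpow_add hx, Real.rpow_natCast, neg_one_mul]
    ring

lemma poly_integrable (P : Polynomial ℝ) (s : ℝ) (hs : -1 < s) :
    IntegrableOn (fun x => P.eval x * (x ^ s * Real.exp (-x))) (Set.Ioi 0) := by
  induction P using Polynomial.induction_on' with
  | add p q hp hq =>
    have h2 : IntegrableOn (fun x => Polynomial.eval x p * (x ^ s * Real.exp (-x))
        + Polynomial.eval x q * (x ^ s * Real.exp (-x))) (Set.Ioi 0) := hp.add hq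
    apply h2.congr_fun ?_ measurableSet_Ioi
    intro x _
    simp only [Polynomial.eval_add]
    ring
  | monomial n c =>
    have h : IntegrableOn (fun x : ℝ => c * (x ^ ((n : ℝ) + s) * Real.exp (-x)))
        (Set.Ioi 0) := (Ibase ((n : ℝ) + s) (by have : (0:ℝ) ≤ n := Nat.cast_nonneg n; linarith)).const_mul c
    apply h.congr_fun ?_ measurableSet_Ioi
    intro x hx
    simp only [Polynomial.eval_monomial]
    rw [Real.rpow_add hx, Real.rpow_natCast]
    ring


-- from t9.lean
lemma lag_const_hasDerivAt (β : ℝ) (x : ℝ) : HasDerivAt (lag β 0) 0 x := by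
  have h : (lag β 0) = fun _ : ℝ => (1:ℝ) := funext (lag_zero β)
  rw [h]
  exact hasDerivAt_const x 1

lemma lag_neg_hasDerivAt (β : ℝ) (j : ℕ) (x : ℝ) :
    HasDerivAt (fun y => lag β (j + 1) (-y)) (lag (β + 1) j (-x)) x := by
  have h := (lag_hasDerivAt β j (-x)).comp x (hasDerivAt_neg x)
  simp at h; exact h

/-- `b(x) = (m+1) L_{m+1}^{-α-2}(-x)` satisfies `b = x η' - (α+1-x) η`. -/
lemma b_identity (α : ℝ) (m : ℕ) (hm : 1 ≤ m) (x : ℝ) :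
    ((m : ℝ) + 1) * lag (-α - 2) (m + 1) (-x)
      = x * lag (-α) (m - 1) (-x) - (α + 1 - x) * lag (-α - 1) m (-x) := by
  obtain ⟨m', rfl⟩ : ∃ m', m = m' + 1 := ⟨m - 1, by omega⟩
  have h := lag_rec m' (-α - 2) (-x)
  have e1 : -α - 2 + 1 = -α - 1 := by ring
  have e2 : -α - 2 + 2 = -α := by ring
  rw [e1, e2] at h
  have e3 : m' + 1 + 1 = m' + 2 := rfl
  have e4 : m' + 1 - 1 = m' := rfl
  rw [e3, e4]
  push_cast at h ⊢
  linarith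

/-- Derivative of the exceptional polynomial: `(L^{III}_{m,n})' = n L_m^{-α-1}(-x) L_{n-m-1}^{α+1}(x)`. -/
lemma LIII_hasDerivAt (α : ℝ) (m k : ℕ) (hm : 1 ≤ m) (hk : 1 ≤ k) (x : ℝ) :
    HasDerivAt (LIII α m k)
      (((m : ℝ) + (k : ℝ)) * lag (-α - 1) m (-x) * lag (α + 1) (k - 1) x) x := by
  obtain ⟨m', rfl⟩ : ∃ m', m = m' + 1 := ⟨m - 1, by omega⟩
  have hb : HasDerivAt (fun y => ((m' : ℝ) + 1 + 1) * lag (-α - 2) (m' + 1 + 1) (-y))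
      (((m' : ℝ) + 1 + 1) * lag (-α - 1) (m' + 1) (-x)) x := by
    have h := (lag_neg_hasDerivAt (-α - 2) (m' + 1) x).const_mul ((m' : ℝ) + 1 + 1)
    rw [show -α - 2 + 1 = -α - 1 by ring] at h
    exact h
  have hη : HasDerivAt (fun y => lag (-α - 1) (m' + 1) (-y)) (lag (-α) m' (-x)) x := by
    have h := lag_neg_hasDerivAt (-α - 1) m' x
    rw [show -α - 1 + 1 = -α by ring] at h
    exact h
  rcases Nat.lt_or_ge k 2 with hk2 | hk2
  · -- k = 1
    obtain rfl : k = 1 := by omega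
    have hL : LIII α (m' + 1) 1 = fun y => ((m' : ℝ) + 1 + 1) * lag (-α - 2) (m' + 1 + 1) (-y) := by
      funext y
      rw [LIII]
      norm_num [lagZ, lag_zero]
    rw [hL]
    convert hb using 1
    push_cast
    rw [lag_zero]
    ring
  · -- k ≥ 2
    obtain ⟨k', rfl⟩ : ∃ k', k = k' + 2 := ⟨k - 2, by omega⟩
    have hgz : ∀ y : ℝ, lagZ (α + 2) (((k' + 2 : ℕ) : ℤ) - 2) y = lag (α + 2) k' y := by
      intro y
      rw [lagZ, if_pos (by omega)]
      norm_num
    have hL : LIII α (m' + 1) (k' + 2) = fun y =>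
        y * lag (α + 2) k' y * lag (-α - 1) (m' + 1) (-y)
          + ((m' : ℝ) + 1 + 1) * lag (α + 1) (k' + 1) y * lag (-α - 2) (m' + 1 + 1) (-y) := by
      funext y
      rw [LIII, hgz]
      norm_num
    have hf : HasDerivAt (lag (α + 1) (k' + 1)) (-(lag (α + 2) k' x)) x := by
      have h := lag_hasDerivAt (α + 1) k' x
      rw [show α + 1 + 1 = α + 2 by ring] at h
      exact h
    -- derivative of g = lag (α+2) k'
    have hg : ∃ dg : ℝ, HasDerivAt (lag (α + 2) k') dg x ∧
        ((k' : ℝ) + 1) * lag (α + 1) (k' + 1) x = (α + 2 - x) * lag (α + 2) k' x + x * dg := by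
      rcases Nat.eq_zero_or_pos k' with rfl | hk'
      · refine ⟨0, lag_const_hasDerivAt _ x, ?_⟩
        rw [lag_zero, lag_one]
        push_cast
        ring
      · obtain ⟨k'', rfl⟩ : ∃ k'', k' = k'' + 1 := ⟨k' - 1, by omega⟩
        have hd := lag_hasDerivAt (α + 2) k'' x
        rw [show α + 2 + 1 = α + 3 by ring] at hd
        refine ⟨-(lag (α + 3) k'' x), hd, ?_⟩
        have h := lag_rec k'' (α + 1) x
        have e1 : α + 1 + 1 = α + 2 := by ring
        have e2 : α + 1 + 2 = α + 3 := by ring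
        rw [e1, e2] at h
        push_cast at h ⊢
        linarith
    obtain ⟨dg, hgd, hode⟩ := hg
    rw [hL]
    have h1 : HasDerivAt (fun y => y * lag (α + 2) k' y * lag (-α - 1) (m' + 1) (-y))
        ((1 * lag (α + 2) k' x + x * dg) * lag (-α - 1) (m' + 1) (-x)
          + x * lag (α + 2) k' x * lag (-α) m' (-x)) x :=
      (((hasDerivAt_id x).mul hgd)).mul hη
    have h2 : HasDerivAt (fun y => ((m' : ℝ) + 1 + 1) * lag (α + 1) (k' + 1) y
          * lag (-α - 2) (m' + 1 + 1) (-y))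
        ((((m' : ℝ) + 1 + 1) * (-(lag (α + 2) k' x))) * lag (-α - 2) (m' + 1 + 1) (-x)
          + ((m' : ℝ) + 1 + 1) * lag (α + 1) (k' + 1) x * lag (-α - 1) (m' + 1) (-x)) x := by
      have h := lag_neg_hasDerivAt (-α - 2) (m' + 1) x
      rw [show -α - 2 + 1 = -α - 1 by ring] at h
      exact (hf.const_mul _).mul h
    have hsum := h1.add h2
    refine hsum.congr_deriv (Eq.symm ?_)
    have hbid := b_identity α (m' + 1) (by omega) x
    have e4 : m' + 1 - 1 = m' := rfl
    rw [e4] at hbid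
    have e5 : (k' + 2) - 1 = k' + 1 := rfl
    rw [e5]
    push_cast at hbid hode ⊢
    linear_combination (lag (-α - 1) (m' + 1) (-x)) * hode + (lag (α + 2) k' x) * hbid


-- from t6
lemma lag_norm (β : ℝ) (hβ : -1 < β) (j : ℕ) :
    ∫ x in Set.Ioi (0:ℝ), (lag β j x) ^ 2 * (x ^ β * Real.exp (-x))
      = Real.Gamma (β + j + 1) / (j.factorial : ℝ) := by
  set A : ℕ → ℝ := fun k =>
    (-1 : ℝ) ^ k * (∏ r ∈ Finset.range (j - k), (β + (k : ℝ) + 1 + (r : ℝ))) /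
      ((Nat.factorial (j - k) : ℝ) * (Nat.factorial k : ℝ)) with hA
  have lag_eq : ∀ x : ℝ, lag β j x = ∑ k ∈ Finset.range (j + 1), A k * x ^ k := fun x => rfl
  have hcast : ∀ i : ℕ, (0:ℝ) ≤ (i:ℝ) := fun i => Nat.cast_nonneg i
  have hexp : ∀ i l : ℕ, (-1:ℝ) < β + i + l := by
    intro i l; have := hcast i; have := hcast l; linarith
  -- step 1: pointwise identity on Ioi 0
  have step1 : ∀ x ∈ Set.Ioi (0:ℝ),
      (lag β j x) ^ 2 * (x ^ β * Real.exp (-x))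
        = ∑ i ∈ Finset.range (j + 1), ∑ l ∈ Finset.range (j + 1),
            (A i * A l) * (x ^ (β + i + l) * Real.exp (-x)) := by
    intro x hx
    have hx' : (0:ℝ) < x := hx
    rw [lag_eq, sq, Finset.sum_mul_sum, Finset.sum_mul]
    apply Finset.sum_congr rfl
    intro i _
    rw [Finset.sum_mul]
    apply Finset.sum_congr rfl
    intro l _
    have e1 : x ^ i = x ^ (i:ℝ) := (Real.rpow_natCast x i).symm
    have e2 : x ^ l = x ^ (l:ℝ) := (Real.rpow_natCast x l).symm
    rw [e1, e2, show β + (i:ℝ) + (l:ℝ) = (i:ℝ) + ((l:ℝ) + β) by ring,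
      Real.rpow_add hx', Real.rpow_add hx']
    ring
  rw [setIntegral_congr_fun measurableSet_Ioi step1]
  -- step 2: swap integral and sums
  have hint : ∀ i l : ℕ, IntegrableOn
      (fun x : ℝ => (A i * A l) * (x ^ (β + i + l) * Real.exp (-x))) (Set.Ioi 0) :=
    fun i l => (Ibase (β + i + l) (hexp i l)).const_mul _
  rw [integral_finset_sum _ (fun i _ => integrable_finset_sum _ (fun l _ => hint i l))]
  have step2 : ∀ i : ℕ,
      (∫ x in Set.Ioi (0:ℝ), ∑ l ∈ Finset.range (j + 1),
        (A i * A l) * (x ^ (β + i + l) * Real.exp (-x)))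
      = ∑ l ∈ Finset.range (j + 1), (A i * A l) * Real.Gamma (β + i + l + 1) := by
    intro i
    rw [integral_finset_sum _ (fun l _ => hint i l)]
    apply Finset.sum_congr rfl
    intro l _
    rw [MeasureTheory.integral_const_mul, mono_integral _ (hexp i l)]
  simp only [step2]
  -- step 3: inner sums via fdiff
  have inner : ∀ i ∈ Finset.range (j + 1),
      ∑ l ∈ Finset.range (j + 1), (A i * A l) * Real.Gamma (β + i + l + 1)
        = A i * (Real.Gamma (β + j + 1) / (j.factorial : ℝ)
            * (if i = j then (-1 : ℝ) ^ j * (j.factorial : ℝ) else 0)) := by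
    intro i hi
    have hij : i ≤ j := by simpa using Nat.lt_succ_iff.mp (Finset.mem_range.mp hi)
    have key : ∀ l ∈ Finset.range (j + 1),
        (A i * A l) * Real.Gamma (β + i + l + 1)
          = A i * (Real.Gamma (β + j + 1) / (j.factorial : ℝ)
              * ((-1 : ℝ) ^ l * (j.choose l : ℝ)
                  * ∏ r ∈ Finset.range i, ((β + 1) + (l : ℝ) + (r : ℝ)))) := by
      intro l hl
      have hlj : l ≤ j := by simpa using Nat.lt_succ_iff.mp (Finset.mem_range.mp hl)
      have ht : (0:ℝ) < β + l + 1 := by have := hcast l; linarith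
      have h1 : Real.Gamma (β + i + l + 1)
          = (∏ r ∈ Finset.range i, ((β + 1) + (l : ℝ) + (r : ℝ))) * Real.Gamma (β + l + 1) := by
        rw [show β + (i:ℝ) + (l:ℝ) + 1 = (β + (l:ℝ) + 1) + (i:ℝ) by ring, Gamma_shift _ ht]
        congr 1
        apply Finset.prod_congr rfl; intro r _; ring
      have h2 : (∏ r ∈ Finset.range (j - l), (β + (l:ℝ) + 1 + (r:ℝ))) * Real.Gamma (β + l + 1)
          = Real.Gamma (β + j + 1) := by
        rw [← Gamma_shift _ ht (j - l)]
        congr 1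
        rw [Nat.cast_sub hlj]
        ring
      have h3 : ((j.choose l : ℝ)) * ((Nat.factorial (j - l) : ℝ) * (Nat.factorial l : ℝ))
          = (j.factorial : ℝ) := by
        rw [← Nat.choose_mul_factorial_mul_factorial hlj]
        push_cast
        ring
      have hf1 : (Nat.factorial (j - l) : ℝ) ≠ 0 := by positivity
      have hf2 : (Nat.factorial l : ℝ) ≠ 0 := by positivity
      have hf3 : (Nat.factorial j : ℝ) ≠ 0 := by positivity
      have hAl : A l * Real.Gamma (β + i + l + 1)
          = Real.Gamma (β + j + 1) / (j.factorial : ℝ)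
              * ((-1 : ℝ) ^ l * (j.choose l : ℝ)
                  * ∏ r ∈ Finset.range i, ((β + 1) + (l : ℝ) + (r : ℝ))) := by
        rw [h1, hA]
        simp only
        rw [div_mul_eq_mul_div, div_mul_eq_mul_div,
          div_eq_div_iff (by positivity) hf3, ← h2, ← h3]
        ring
      calc (A i * A l) * Real.Gamma (β + i + l + 1)
          = A i * (A l * Real.Gamma (β + i + l + 1)) := by ring
        _ = _ := by rw [hAl]
    rw [Finset.sum_congr rfl key, ← Finset.mul_sum, ← Finset.mul_sum, fdiff j (β + 1) i hij]
  rw [Finset.sum_congr rfl inner]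
  rw [Finset.sum_eq_single j]
  · rw [if_pos rfl, hA]
    simp only [Nat.sub_self, Finset.range_zero, Finset.prod_empty, Nat.factorial_zero,
      Nat.cast_one, one_mul, mul_one]
    have hf3 : (Nat.factorial j : ℝ) ≠ 0 := by positivity
    rcases Nat.even_or_odd j with he | ho
    · rw [he.neg_one_pow]
      field_simp
    · rw [ho.neg_one_pow]
      field_simp
  · intro i hi hne
    rw [if_neg hne, mul_zero, mul_zero]
  · intro h
    exact absurd (Finset.self_mem_range_succ j) h


-- main
noncomputable def lagP (β : ℝ) (n : ℕ) : Polynomial ℝ :=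
  ∑ k ∈ Finset.range (n + 1),
    Polynomial.C ((-1 : ℝ) ^ k * (∏ j ∈ Finset.range (n - k), (β + (k : ℝ) + 1 + (j : ℝ))) /
      ((Nat.factorial (n - k) : ℝ) * (Nat.factorial k : ℝ))) * Polynomial.X ^ k

lemma lagP_eval (β : ℝ) (n : ℕ) (x : ℝ) : (lagP β n).eval x = lag β n x := by
  rw [lagP, lag, Polynomial.eval_finset_sum]
  simp

lemma lag_continuous (β : ℝ) (n : ℕ) : Continuous (lag β n) := by
  cases n with
  | zero =>
    have : lag β 0 = fun _ : ℝ => (1:ℝ) := funext (lag_zero β)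
    rw [this]; exact continuous_const
  | succ j =>
    exact Differentiable.continuous (fun x => (lag_hasDerivAt β j x).differentiableAt)

/-- for `-1 < α < 0` and `n ≥ m+1 ≥ 2`, the squared norm of the Type III
exceptional `X_m`-Laguerre polynomial `L_{m,n}^{III,α}` with respect to the weight
`W_m^{III,α}(x) = x^α e^{-x}/(L_m^{-α-1}(-x))²` on `(0,∞)` is
`n Γ(n-m+α+1)/(n-m-1)!`. (Here `L_{m,n}^{III,α} = LIII α m (n-m)`.) -/
theorem typeIII_norm (α : ℝ) (hα1 : -1 < α) (hα2 : α < 0) (m n : ℕ)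
    (hm : 1 ≤ m) (hn : m + 1 ≤ n) :
    (∫ x in Set.Ioi (0 : ℝ),
        (LIII α m (n - m) x) ^ 2 * (x ^ α * Real.exp (-x) / (lag (-α - 1) m (-x)) ^ 2))
      = (n : ℝ) * Real.Gamma ((n : ℝ) - (m : ℝ) + α + 1)
          / (Nat.factorial (n - m - 1) : ℝ) := by
  obtain ⟨k, rfl⟩ : ∃ k : ℕ, n = m + (k + 1) := ⟨n - m - 1, by omega⟩
  rw [show m + (k + 1) - m = k + 1 by omega]
  -- abbreviations (plain functions)
  set η : ℝ → ℝ := fun x => lag (-α - 1) m (-x) with hηdef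
  set f : ℝ → ℝ := fun x => lag (α + 1) k x with hfdef
  set L : ℝ → ℝ := fun x => LIII α m (k + 1) x with hLdef
  set df : ℝ → ℝ := fun x => -(lagZ (α + 2) (((k + 1 : ℕ) : ℤ) - 2) x) with hdfdef
  set dη : ℝ → ℝ := fun x => lag (-α) (m - 1) (-x) with hdηdef
  set bb : ℝ → ℝ := fun x => ((m : ℝ) + 1) * lag (-α - 2) (m + 1) (-x) with hbbdef
  have hηpos : ∀ x : ℝ, 0 ≤ x → 0 < η x := fun x hx => eta_pos α hα2 m hx
  have hη0 : 0 < η 0 := by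
    have := eta_pos α hα2 m (le_refl (0:ℝ)); simpa [hηdef] using this
  have hηlow : ∀ x : ℝ, 0 ≤ x → η 0 ≤ η x := by
    intro x hx
    have := eta_lower α hα2 m hx
    simpa [hηdef] using this
  -- derivative facts
  have hfd : ∀ x : ℝ, HasDerivAt f (df x) x := by
    intro x
    cases k with
    | zero =>
      have : df x = 0 := by simp [hdfdef, lagZ]
      rw [this]
      exact lag_const_hasDerivAt _ x
    | succ k' =>
      have h := lag_hasDerivAt (α + 1) k' x
      have e : df x = -(lag (α + 2) k' x) := by
        rw [hdfdef]
        simp only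
        rw [lagZ, if_pos (by omega : (0:ℤ) ≤ ((k' + 1 + 1 : ℕ) : ℤ) - 2)]
        rw [show ((k' + 1 + 1 : ℕ) : ℤ) - 2 = (k' : ℤ) by push_cast; ring, Int.toNat_natCast]
      rw [e, show α + 2 = α + 1 + 1 by ring]
      exact h
  have hηd : ∀ x : ℝ, HasDerivAt η (dη x) x := by
    intro x
    obtain ⟨m', rfl⟩ : ∃ m', m = m' + 1 := ⟨m - 1, by omega⟩
    have h := lag_neg_hasDerivAt (-α - 1) m' x
    rw [show -α - 1 + 1 = -α by ring] at h
    simpa [hηdef, hdηdef] using h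
  have hLd : ∀ x : ℝ, HasDerivAt L (((m : ℝ) + (k : ℝ) + 1) * η x * f x) x := by
    intro x
    have h := LIII_hasDerivAt α m (k + 1) hm (by omega) x
    rw [show (k + 1) - 1 = k from rfl] at h
    have e : ((m : ℝ) + ((k + 1 : ℕ) : ℝ)) = (m : ℝ) + (k : ℝ) + 1 := by push_cast; ring
    rw [e] at h
    exact h
  have hrel : ∀ x : ℝ, L x = bb x * f x - x * η x * df x := by
    intro x
    rw [hLdef, hbbdef, hdfdef, hfdef, hηdef]
    simp only [LIII]
    rw [show (k + 1) - 1 = k from rfl]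
    ring
  have hbb : ∀ x : ℝ, bb x = x * dη x - (α + 1 - x) * η x := fun x => b_identity α m hm x
  -- polynomial representations
  set pf : Polynomial ℝ := lagP (α + 1) k with hpfdef
  set pη : Polynomial ℝ := (lagP (-α - 1) m).comp (-Polynomial.X) with hpηdef
  set pG : Polynomial ℝ := if 2 ≤ k + 1 then lagP (α + 2) (k + 1 - 2) else 0 with hpGdef
  set pL : Polynomial ℝ := Polynomial.X * pG * pη
      + Polynomial.C ((m : ℝ) + 1) * pf * (lagP (-α - 2) (m + 1)).comp (-Polynomial.X) with hpLdef
  have hpfe : ∀ x : ℝ, pf.eval x = f x := fun x => lagP_eval _ _ _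
  have hpηe : ∀ x : ℝ, pη.eval x = η x := by
    intro x
    rw [hpηdef, Polynomial.eval_comp]
    simp [lagP_eval]
    rfl
  have hpGe : ∀ x : ℝ, pG.eval x = lagZ (α + 2) (((k + 1 : ℕ) : ℤ) - 2) x := by
    intro x
    rw [hpGdef]
    cases k with
    | zero => simp [lagZ]
    | succ k' =>
      rw [if_pos (by omega), lagZ, if_pos (by omega : (0:ℤ) ≤ ((k' + 1 + 1 : ℕ) : ℤ) - 2)]
      rw [show ((k' + 1 + 1 : ℕ) : ℤ) - 2 = (k' : ℤ) by push_cast; ring, Int.toNat_natCast]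
      rw [show k' + 1 + 1 - 2 = k' by omega]
      rw [lagP_eval]
  have hpLe : ∀ x : ℝ, pL.eval x = L x := by
    intro x
    rw [hpLdef]
    simp only [Polynomial.eval_add, Polynomial.eval_mul, Polynomial.eval_X, Polynomial.eval_C,
      Polynomial.eval_comp, Polynomial.eval_neg]
    rw [hpGe, hpηe, hpfe, hLdef]
    simp only [LIII]
    rw [show (k + 1) - 1 = k from rfl]
    rw [lagP_eval]
  -- the antiderivative
  set F : ℝ → ℝ := fun x => f x * L x * (x ^ (α + 1) * Real.exp (-x)) / η x with hFdef
  set G : ℝ → ℝ := fun x => ((m : ℝ) + (k : ℝ) + 1) * f x ^ 2 * (x ^ (α + 1) * Real.exp (-x))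
      - L x ^ 2 * (x ^ α * Real.exp (-x) / η x ^ 2) with hGdef
  have hα1' : (0:ℝ) < α + 1 := by linarith
  have hFderiv : ∀ x ∈ Set.Ioi (0:ℝ), HasDerivAt F (G x) x := by
    intro x hx
    have hx' : (0:ℝ) < x := hx
    have hηne : η x ≠ 0 := (hηpos x hx'.le).ne'
    have hrpow : HasDerivAt (fun y : ℝ => y ^ (α + 1)) ((α + 1) * x ^ α) x := by
      have h := Real.hasDerivAt_rpow_const (x := x) (p := α + 1) (Or.inl hx'.ne')
      rw [show α + 1 - 1 = α by ring] at h
      exact h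
    have hexp : HasDerivAt (fun y : ℝ => Real.exp (-y)) (-Real.exp (-x)) x := by
      have h := (hasDerivAt_neg x).exp
      simpa using h
    have hnum : HasDerivAt (fun y => f y * L y * (y ^ (α + 1) * Real.exp (-y)))
        ((df x * L x + f x * (((m : ℝ) + (k : ℝ) + 1) * η x * f x)) * (x ^ (α + 1) * Real.exp (-x))
          + f x * L x * ((α + 1) * x ^ α * Real.exp (-x) + x ^ (α + 1) * (-Real.exp (-x)))) x :=
      ((hfd x).mul (hLd x)).mul (hrpow.mul hexp)
    have hdiv := hnum.div (hηd x) hηne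
    have hx1 : x ^ (α + 1) = x * x ^ α := by
      rw [Real.rpow_add hx', Real.rpow_one]; ring
    have hGmul : G x * η x ^ 2
        = ((m : ℝ) + (k : ℝ) + 1) * f x ^ 2 * (x ^ (α + 1) * Real.exp (-x)) * η x ^ 2
          - L x ^ 2 * (x ^ α * Real.exp (-x)) := by
      rw [hGdef]
      simp only
      field_simp
    have heq : ((df x * L x + f x * (((m : ℝ) + (k : ℝ) + 1) * η x * f x)) * (x ^ (α + 1) * Real.exp (-x))
          + f x * L x * ((α + 1) * x ^ α * Real.exp (-x) + x ^ (α + 1) * (-Real.exp (-x)))) * η x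
          - f x * L x * (x ^ (α + 1) * Real.exp (-x)) * dη x = G x * η x ^ 2 := by
      rw [hGmul, hx1]
      linear_combination (x ^ α * Real.exp (-x) * L x) * (hrel x)
        + (x ^ α * Real.exp (-x) * L x * f x) * (hbb x)
    rw [hFdef]
    have : G x = (((df x * L x + f x * (((m : ℝ) + (k : ℝ) + 1) * η x * f x)) * (x ^ (α + 1) * Real.exp (-x))
          + f x * L x * ((α + 1) * x ^ α * Real.exp (-x) + x ^ (α + 1) * (-Real.exp (-x)))) * η x
          - f x * L x * (x ^ (α + 1) * Real.exp (-x)) * dη x) / η x ^ 2 := by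
      rw [heq, mul_div_assoc]
      rw [div_self (pow_ne_zero 2 hηne), mul_one]
    rw [this]
    exact hdiv
  -- continuity at 0
  have hfc : Continuous f := lag_continuous _ _
  have hLc : Continuous L := Differentiable.continuous (fun x => (hLd x).differentiableAt)
  have hηc : Continuous η := Differentiable.continuous (fun x => (hηd x).differentiableAt)
  have hcont : ContinuousWithinAt F (Set.Ici 0) 0 := by
    apply ContinuousWithinAt.div
    · apply ContinuousWithinAt.mul
      · exact ((hfc.continuousAt).mul (hLc.continuousAt)).continuousWithinAt
      · apply ContinuousWithinAt.mul
        · exact ((Real.continuousAt_rpow_const 0 (α + 1)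
            (Or.inr hα1'.le)).continuousWithinAt)
        · exact ((Real.continuous_exp.comp continuous_neg).continuousAt).continuousWithinAt
    · exact hηc.continuousAt.continuousWithinAt
    · exact hη0.ne'
  have hF0 : F 0 = 0 := by
    rw [hFdef]
    simp only
    rw [Real.zero_rpow hα1'.ne']
    simp
  -- limit at infinity
  have hlim : Tendsto F atTop (nhds 0) := by
    have hq := (poly_tendsto (pf * pL) (α + 1)).norm.const_mul (η 0)⁻¹
    rw [norm_zero, mul_zero] at hq
    apply squeeze_zero_norm' ?_ hq
    filter_upwards [eventually_ge_atTop (0:ℝ)] with x hx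
    have hηx := hηpos x hx
    have hb := hηlow x hx
    have hnum : ((pf * pL).eval x) * (x ^ (α + 1) * Real.exp (-x))
        = f x * L x * (x ^ (α + 1) * Real.exp (-x)) := by
      rw [Polynomial.eval_mul, hpfe x, hpLe x]
    rw [hnum, hFdef]
    simp only
    rw [norm_div, Real.norm_eq_abs (η x), abs_of_pos hηx, div_eq_inv_mul]
    gcongr
  -- integrability of the pieces
  have hT1int : IntegrableOn
      (fun x => ((m : ℝ) + (k : ℝ) + 1) * f x ^ 2 * (x ^ (α + 1) * Real.exp (-x)))
      (Set.Ioi 0) := by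
    have h := poly_integrable (Polynomial.C ((m : ℝ) + (k : ℝ) + 1) * pf ^ 2) (α + 1)
      (by linarith)
    apply h.congr_fun ?_ measurableSet_Ioi
    intro x _
    simp only [Polynomial.eval_mul, Polynomial.eval_pow, Polynomial.eval_C, hpfe x]
  have hT2meas : AEStronglyMeasurable
      (fun x => L x ^ 2 * (x ^ α * Real.exp (-x) / η x ^ 2))
      (volume.restrict (Set.Ioi 0)) := by
    apply ContinuousOn.aestronglyMeasurable ?_ measurableSet_Ioi
    intro x hx
    have hx' : (0:ℝ) < x := hx
    have : ContinuousAt (fun x => L x ^ 2 * (x ^ α * Real.exp (-x) / η x ^ 2)) x := by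
      apply ContinuousAt.mul
      · exact (hLc.continuousAt).pow 2
      · apply ContinuousAt.div
        · exact (Real.continuousAt_rpow_const x α (Or.inl hx'.ne')).mul
            ((Real.continuous_exp.comp continuous_neg).continuousAt)
        · exact (hηc.continuousAt).pow 2
        · exact pow_ne_zero 2 (hηpos x hx'.le).ne'
    exact this.continuousWithinAt
  have hT2int : IntegrableOn
      (fun x => L x ^ 2 * (x ^ α * Real.exp (-x) / η x ^ 2)) (Set.Ioi 0) := by
    have hgint : IntegrableOn
        (fun x => ((η 0)⁻¹ ^ 2) * ((pL ^ 2).eval x * (x ^ α * Real.exp (-x))))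
        (Set.Ioi 0) := (poly_integrable (pL ^ 2) α (by linarith)).const_mul _
    apply Integrable.mono' hgint hT2meas
    rw [ae_restrict_iff' measurableSet_Ioi]
    apply ae_of_all
    intro x hx
    have hx' : (0:ℝ) < x := hx
    have hηx := hηpos x hx'.le
    have hb := hηlow x hx'.le
    have hL2 : (pL ^ 2).eval x = L x ^ 2 := by
      simp [Polynomial.eval_pow, hpLe x]
    rw [hL2, Real.norm_eq_abs]
    have hw : (0:ℝ) ≤ x ^ α * Real.exp (-x) := by positivity
    have hnn : (0:ℝ) ≤ L x ^ 2 * (x ^ α * Real.exp (-x) / η x ^ 2) := by positivity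
    rw [abs_of_nonneg hnn]
    have step : L x ^ 2 * (x ^ α * Real.exp (-x) / η x ^ 2)
        = L x ^ 2 * (x ^ α * Real.exp (-x)) / η x ^ 2 := by ring
    rw [step]
    calc L x ^ 2 * (x ^ α * Real.exp (-x)) / η x ^ 2
        ≤ L x ^ 2 * (x ^ α * Real.exp (-x)) / η 0 ^ 2 := by
          gcongr
      _ = (η 0)⁻¹ ^ 2 * (L x ^ 2 * (x ^ α * Real.exp (-x))) := by
          rw [div_eq_inv_mul, ← inv_pow]
  have hGint : IntegrableOn G (Set.Ioi 0) := by
    rw [hGdef]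
    exact hT1int.sub hT2int
  -- FTC on (0, ∞)
  have hFTC := integral_Ioi_of_hasDerivAt_of_tendsto hcont hFderiv hGint hlim
  rw [hF0, sub_zero] at hFTC
  -- final computation
  have hsplit : (∫ x in Set.Ioi (0:ℝ),
        (LIII α m (k + 1) x) ^ 2 * (x ^ α * Real.exp (-x) / (lag (-α - 1) m (-x)) ^ 2))
      = ∫ x in Set.Ioi (0:ℝ),
        (((m : ℝ) + (k : ℝ) + 1) * f x ^ 2 * (x ^ (α + 1) * Real.exp (-x)) - G x) := by
    apply setIntegral_congr_fun measurableSet_Ioi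
    intro x _
    rw [hGdef]
    simp only
    rw [hLdef, hηdef]
    ring
  rw [hsplit, integral_sub hT1int hGint, hFTC, sub_zero]
  have hmulout : (∫ x in Set.Ioi (0:ℝ),
        ((m : ℝ) + (k : ℝ) + 1) * f x ^ 2 * (x ^ (α + 1) * Real.exp (-x)))
      = ((m : ℝ) + (k : ℝ) + 1) * ∫ x in Set.Ioi (0:ℝ),
          f x ^ 2 * (x ^ (α + 1) * Real.exp (-x)) := by
    rw [← MeasureTheory.integral_const_mul]
    apply setIntegral_congr_fun measurableSet_Ioi
    intro x _
    ring
  rw [hmulout]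
  have hnorm : (∫ x in Set.Ioi (0:ℝ), f x ^ 2 * (x ^ (α + 1) * Real.exp (-x)))
      = Real.Gamma (α + 1 + k + 1) / (k.factorial : ℝ) := by
    rw [hfdef]
    exact lag_norm (α + 1) (by linarith) k
  rw [hnorm]
  rw [show ((m + (k + 1) : ℕ) : ℝ) = (m : ℝ) + (k : ℝ) + 1 by push_cast; ring]
  rw [show ((m : ℝ) + (k : ℝ) + 1) - (m : ℝ) + α + 1 = α + 1 + k + 1 by ring]
  rw [mul_div_assoc, Nat.add_sub_cancel]
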